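/- Let f = Σ_{r=0}^n x_r^{d_1} g_r be a CW-Nagata polynomial of bidegree (d_1,d_2). For every j with 0 ≤ j ≤ d_2, dim_K A_{(d_1,j)} = f_{d_2−j}, the number of monic monomials of degree d_2−j in u_1,…,u_m dividing at least one g_r. -/

import Mathlib

open MvPolynomial

namespace CW

variable {σ K : Type*} [CommSemiring K]

/-- A generic "monomial contraction-type" action of the polynomial ring on itself,
determined by a structure coefficient `ν c a` (the coefficient produced when the
operator monomial with exponent `a` acts on the monomial with exponent `c`). -/
noncomputable def genAct (ν : (σ →₀ ℕ) → (σ →₀ ℕ) → K) (α f : MvPolynomial σ K) :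
    MvPolynomial σ K :=
  Finsupp.sum (AddMonoidAlgebra.coeff α) fun a ca =>
    Finsupp.sum (AddMonoidAlgebra.coeff f) fun c cf => monomial (c - a) (ν c a * (ca * cf))

theorem genAct_zero_left (ν : (σ →₀ ℕ) → (σ →₀ ℕ) → K) (f : MvPolynomial σ K) :
    genAct ν 0 f = 0 :=
  Finsupp.sum_zero_index (h := fun a ca =>
    Finsupp.sum (AddMonoidAlgebra.coeff f) fun c cf => monomial (c - a) (ν c a * (ca * cf)))

theorem genAct_zero_right (ν : (σ →₀ ℕ) → (σ →₀ ℕ) → K) (α : MvPolynomial σ K) :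
    genAct ν α 0 = 0 := by
  unfold genAct
  simp only [AddMonoidAlgebra.coeff_zero, Finsupp.sum, Finsupp.support_zero, Finset.sum_empty,
    Finset.sum_const_zero]

theorem genAct_add_left (ν : (σ →₀ ℕ) → (σ →₀ ℕ) → K) (α β f : MvPolynomial σ K) :
    genAct ν (α + β) f = genAct ν α f + genAct ν β f := by
  unfold genAct
  rw [AddMonoidAlgebra.coeff_add]
  apply Finsupp.sum_add_index'
  · intro a
    simp only [mul_zero, zero_mul, map_zero, Finsupp.sum, Finset.sum_const_zero]
  · intro a b₁ b₂
    rw [← Finsupp.sum_add]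
    apply Finsupp.sum_congr
    intro c _
    rw [add_mul, mul_add, map_add]

theorem genAct_add_right (ν : (σ →₀ ℕ) → (σ →₀ ℕ) → K) (α f g : MvPolynomial σ K) :
    genAct ν α (f + g) = genAct ν α f + genAct ν α g := by
  unfold genAct
  rw [← Finsupp.sum_add]
  apply Finsupp.sum_congr
  intro a _
  rw [AddMonoidAlgebra.coeff_add]
  apply Finsupp.sum_add_index'
  · intro c
    simp only [mul_zero, map_zero]
  · intro c c₁ c₂
    rw [mul_add, mul_add, map_add]

theorem genAct_monomial (ν : (σ →₀ ℕ) → (σ →₀ ℕ) → K) (a c : σ →₀ ℕ) (r s : K) :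
    genAct ν (monomial a r) (monomial c s) = monomial (c - a) (ν c a * (r * s)) := by
  unfold genAct
  rw [← single_eq_monomial a r, ← single_eq_monomial c s]
  rw [AddMonoidAlgebra.coeff_single, AddMonoidAlgebra.coeff_single]
  rw [Finsupp.sum_single_index, Finsupp.sum_single_index]
  · simp only [mul_zero, map_zero]
  · simp only [mul_zero, zero_mul, map_zero, Finsupp.sum, Finset.sum_const_zero]

theorem genAct_mul {ν : (σ →₀ ℕ) → (σ →₀ ℕ) → K}
    (hν : ∀ c a b, ν c (a + b) = ν c b * ν (c - b) a) (α β f : MvPolynomial σ K) :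
    genAct ν (α * β) f = genAct ν α (genAct ν β f) := by
  induction α using MvPolynomial.induction_on' with
  | add p q hp hq => rw [add_mul, genAct_add_left, hp, hq, genAct_add_left]
  | monomial a r =>
    induction β using MvPolynomial.induction_on' with
    | add p q hp hq =>
      rw [mul_add, genAct_add_left, hp, hq, ← genAct_add_right, genAct_add_left]
    | monomial b s =>
      induction f using MvPolynomial.induction_on' with
      | add p q hp hq =>
        rw [genAct_add_right, hp, hq, ← genAct_add_right, ← genAct_add_right]
      | monomial c t =>
        rw [monomial_mul, genAct_monomial, genAct_monomial, genAct_monomial,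
          show c - (a + b) = c - b - a from by rw [tsub_tsub, add_comm], hν]
        congr 1
        ring

/-- The annihilator ideal of `f` under the action `genAct ν`. -/
noncomputable def annG (ν : (σ →₀ ℕ) → (σ →₀ ℕ) → K)
    (hν : ∀ c a b, ν c (a + b) = ν c b * ν (c - b) a) (f : MvPolynomial σ K) :
    Ideal (MvPolynomial σ K) where
  carrier := {α | genAct ν α f = 0}
  zero_mem' := genAct_zero_left ν f
  add_mem' := by
    intro a b ha hb
    show genAct ν (a + b) f = 0
    rw [genAct_add_left, ha, hb, add_zero]
  smul_mem' := by
    intro c α hα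
    show genAct ν (c * α) f = 0
    rw [genAct_mul hν, hα, genAct_zero_right]

/-- Structure coefficient of the contraction (apolarity) action: `X^a` sends `x^c`
to `x^(c-a)` if `a ≤ c` and to `0` otherwise. -/
noncomputable def cnu (c a : σ →₀ ℕ) : K :=
  open scoped Classical in if a ≤ c then 1 else 0

theorem cnu_mul (c a b : σ →₀ ℕ) :
    (cnu c (a + b) : K) = cnu c b * cnu (c - b) a := by
  classical
  unfold cnu
  by_cases hb : b ≤ c
  · by_cases ha : a ≤ c - b
    · have h : a + b ≤ c := (le_tsub_iff_right hb).mp ha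
      simp [hb, ha, h]
    · have h : ¬ a + b ≤ c := fun h => ha ((le_tsub_iff_right hb).mpr h)
      simp [hb, ha, h]
  · have h : ¬ a + b ≤ c := fun h => hb (le_trans le_add_self h)
    simp [hb, h]

/-- The contraction action `α ∘ f`. -/
noncomputable def cAct (α f : MvPolynomial σ K) : MvPolynomial σ K :=
  genAct cnu α f

/-- The annihilator `Ann(f)` of `f` under the contraction action, as an ideal. -/
noncomputable def cAnn (f : MvPolynomial σ K) : Ideal (MvPolynomial σ K) :=
  annG cnu cnu_mul f

theorem mem_cAnn {f α : MvPolynomial σ K} : α ∈ cAnn f ↔ cAct α f = 0 := Iff.rfl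

/-- The `K`-submodule of polynomials all of whose monomials satisfy `P`. -/
noncomputable def bihom (K : Type*) [CommSemiring K] {σ : Type*} (P : (σ →₀ ℕ) → Prop) :
    Submodule K (MvPolynomial σ K) where
  carrier := {p | ∀ c ∈ p.support, P c}
  zero_mem' := by
    intro c hc
    simp at hc
  add_mem' := by
    classical
    intro p q hp hq c hc
    rcases Finset.mem_union.mp (MvPolynomial.support_add hc) with h | h
    · exact hp c h
    · exact hq c h
  smul_mem' := by
    intro k p hp c hc
    exact hp c (MvPolynomial.support_smul hc)

/-- The x-degree of an exponent vector. -/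
def degX {n m : ℕ} (c : (Fin (n + 1) ⊕ Fin m) →₀ ℕ) : ℕ := ∑ r, c (Sum.inl r)

/-- The u-degree of an exponent vector. -/
def degU {n m : ℕ} (c : (Fin (n + 1) ⊕ Fin m) →₀ ℕ) : ℕ := ∑ k, c (Sum.inr k)

/-- The bihomogeneous component `T_(i,j)`. -/
noncomputable def Tbi (K : Type*) [CommSemiring K] {n m : ℕ} (i j : ℕ) :
    Submodule K (MvPolynomial (Fin (n + 1) ⊕ Fin m) K) :=
  bihom K fun c => degX c = i ∧ degU c = j

/-- The bigraded component `A_(i,j)` of `A = T ⧸ Ann(f)`: the image of `T_(i,j)`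
in the quotient. -/
noncomputable def Abi {K : Type*} [Field K] {n m : ℕ}
    (f : MvPolynomial (Fin (n + 1) ⊕ Fin m) K) (i j : ℕ) :
    Submodule K (MvPolynomial (Fin (n + 1) ⊕ Fin m) K ⧸ cAnn f) :=
  (Tbi K i j).map (Ideal.Quotient.mkₐ K (cAnn f)).toLinearMap

section Aux

variable {σ K : Type*} [CommSemiring K]

theorem genAct_sum_right (ν : (σ →₀ ℕ) → (σ →₀ ℕ) → K) (α : MvPolynomial σ K)
    {ι : Type*} (s : Finset ι) (h : ι → MvPolynomial σ K) :
    genAct ν α (∑ i ∈ s, h i) = ∑ i ∈ s, genAct ν α (h i) := by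
  induction s using Finset.cons_induction with
  | empty => simp [genAct_zero_right]
  | cons a s ha ih => rw [Finset.sum_cons, Finset.sum_cons, genAct_add_right, ih]

theorem cAct_smul (k : K) (α f : MvPolynomial σ K) :
    cAct (k • α) f = k • cAct α f := by
  rw [smul_eq_C_mul]
  unfold cAct
  rw [genAct_mul cnu_mul]
  generalize genAct cnu α f = p
  induction p using MvPolynomial.induction_on' with
  | add p q hp hq => rw [genAct_add_right, hp, hq, smul_add]
  | monomial c t =>
    rw [MvPolynomial.C_apply, genAct_monomial, MvPolynomial.smul_monomial, tsub_zero]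
    have h1 : (cnu c 0 : K) = 1 := by simp [cnu]
    rw [h1, one_mul, smul_eq_mul]

/-- The contraction action by a fixed `f`, as a `K`-linear map in the operator. -/
noncomputable def PhiL (f : MvPolynomial σ K) :
    MvPolynomial σ K →ₗ[K] MvPolynomial σ K where
  toFun α := cAct α f
  map_add' α β := genAct_add_left cnu α β f
  map_smul' k α := cAct_smul k α f

theorem PhiL_apply (f α : MvPolynomial σ K) : PhiL f α = cAct α f := rfl

theorem cnu_of_le {a c : σ →₀ ℕ} (h : a ≤ c) : (cnu c a : K) = 1 := by simp [cnu, h]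

theorem cnu_of_not_le {a c : σ →₀ ℕ} (h : ¬ a ≤ c) : (cnu c a : K) = 0 := by simp [cnu, h]

end Aux

section Quot

variable {σ K : Type*} [Field K] (f : MvPolynomial σ K)

theorem cAnn_restrict_eq_ker :
    (cAnn f).restrictScalars K = LinearMap.ker (PhiL f) := by
  ext α
  exact Iff.rfl

/-- The map `T/Ann(f) → S` induced by the contraction action. -/
noncomputable def psiL : (MvPolynomial σ K ⧸ cAnn f) →ₗ[K] MvPolynomial σ K :=
  (Submodule.liftQ ((cAnn f).restrictScalars K) (PhiL f)
      (le_of_eq (cAnn_restrict_eq_ker f))).comp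
    (Submodule.Quotient.restrictScalarsEquiv K
      ((cAnn f : Submodule (MvPolynomial σ K) (MvPolynomial σ K)))).symm.toLinearMap

theorem psiL_mk' (α : MvPolynomial σ K) :
    psiL f (Submodule.Quotient.mk α) = PhiL f α := by
  unfold psiL
  rw [LinearMap.comp_apply, LinearEquiv.coe_coe,
    Submodule.Quotient.restrictScalarsEquiv_symm_mk, Submodule.liftQ_apply]

theorem psiL_mk (α : MvPolynomial σ K) :
    psiL f ((Ideal.Quotient.mkₐ K (cAnn f)).toLinearMap α) = PhiL f α := by
  have h : ((Ideal.Quotient.mkₐ K (cAnn f)).toLinearMap α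
      : MvPolynomial σ K ⧸ cAnn f) = Submodule.Quotient.mk α := rfl
  rw [h, psiL_mk']

theorem psiL_inj : Function.Injective (psiL f) := by
  intro x y hxy
  obtain ⟨a, rfl⟩ := Submodule.Quotient.mk_surjective _ x
  obtain ⟨b, rfl⟩ := Submodule.Quotient.mk_surjective _ y
  rw [psiL_mk', psiL_mk'] at hxy
  rw [Submodule.Quotient.eq]
  have h0 : PhiL f (a - b) = 0 := by rw [map_sub, hxy, sub_self]
  exact mem_cAnn.mpr h0

end Quot

section Deg

variable {K : Type*} [Field K] {n m : ℕ}

theorem degX_add (a b : (Fin (n + 1) ⊕ Fin m) →₀ ℕ) : degX (a + b) = degX a + degX b := by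
  simp [degX, Finsupp.add_apply, Finset.sum_add_distrib]

theorem degU_add (a b : (Fin (n + 1) ⊕ Fin m) →₀ ℕ) : degU (a + b) = degU a + degU b := by
  simp [degU, Finsupp.add_apply, Finset.sum_add_distrib]

theorem mapDomain_inl_apply (b : Fin m →₀ ℕ) (r : Fin (n + 1)) :
    (b.mapDomain Sum.inr : (Fin (n + 1) ⊕ Fin m) →₀ ℕ) (Sum.inl r) = 0 :=
  Finsupp.mapDomain_notin_range _ _ (by simp)

theorem mapDomain_inr_apply (b : Fin m →₀ ℕ) (k : Fin m) :
    (b.mapDomain Sum.inr : (Fin (n + 1) ⊕ Fin m) →₀ ℕ) (Sum.inr k) = b k :=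
  Finsupp.mapDomain_apply Sum.inr_injective _ _

theorem degX_mapDomain (b : Fin m →₀ ℕ) :
    degX (n := n) (b.mapDomain Sum.inr) = 0 := by
  simp [degX, mapDomain_inl_apply]

theorem degU_mapDomain (b : Fin m →₀ ℕ) :
    degU (n := n) (b.mapDomain Sum.inr) = ∑ k, b k := by
  simp [degU, mapDomain_inr_apply]

theorem degX_single (r : Fin (n + 1)) (d : ℕ) :
    degX (m := m) (Finsupp.single (Sum.inl r) d) = d := by
  rw [degX, Finset.sum_eq_single_of_mem r (Finset.mem_univ r)]
  · simp
  · intro r' _ hr'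
    rw [Finsupp.single_apply, if_neg (by simp [hr'.symm])]

theorem degU_single (r : Fin (n + 1)) (d : ℕ) :
    degU (m := m) (Finsupp.single (Sum.inl r) d) = 0 := by
  simp [degU, Finsupp.single_apply]

theorem monomial_mem_Tbi {c : (Fin (n + 1) ⊕ Fin m) →₀ ℕ} {i j : ℕ} (k : K)
    (h : degX c = i ∧ degU c = j) : MvPolynomial.monomial c k ∈ Tbi K i j := by
  intro c' hc'
  classical
  rw [MvPolynomial.support_monomial] at hc'
  split at hc'
  · simp at hc'
  · rw [Finset.mem_singleton] at hc'
    rw [hc']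
    exact h

theorem sum_tsub_fin {u v : Fin m →₀ ℕ} (h : u ≤ v) :
    (∑ k, (v - u) k) = (∑ k, v k) - (∑ k, u k) := by
  have h2 : (∑ k, (v - u) k) + (∑ k, u k) = ∑ k, v k := by
    rw [← Finset.sum_add_distrib]
    apply Finset.sum_congr rfl
    intro k _
    rw [Finsupp.tsub_apply]
    exact Nat.sub_add_cancel (h k)
  omega

end Deg

theorem stmt_3 {K : Type*} [Field K] [CharZero K] (n m d₁ d₂ : ℕ)
    (hd₁ : 1 ≤ d₁) (hd₂ : 2 ≤ d₂)
    (g : Fin (n + 1) → (Fin m →₀ ℕ))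
    (hgdeg : ∀ r, (∑ k, g r k) = d₂)
    (hginj : Function.Injective g)
    (f : MvPolynomial (Fin (n + 1) ⊕ Fin m) K)
    (hf : f = ∑ r, MvPolynomial.X (Sum.inl r) ^ d₁ *
      MvPolynomial.monomial ((g r).mapDomain Sum.inr) 1)
    (j : ℕ) (hjd : j ≤ d₂) :
    Module.finrank K (Abi f d₁ j) =
      (((Finset.univ : Finset (Fin (n + 1))).biUnion fun r => Finset.Iic (g r)).filter
        fun s => (∑ k, s k) = d₂ - j).card := by
  classical
  set E : Fin (n + 1) → ((Fin (n + 1) ⊕ Fin m) →₀ ℕ) :=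
    fun r => Finsupp.single (Sum.inl r) d₁ + (g r).mapDomain Sum.inr with hE
  have hfE : f = ∑ r, MvPolynomial.monomial (E r) (1 : K) := by
    rw [hf]
    apply Finset.sum_congr rfl
    intro r _
    rw [MvPolynomial.X_pow_eq_monomial, MvPolynomial.monomial_mul, one_mul]
  have hact : ∀ a : (Fin (n + 1) ⊕ Fin m) →₀ ℕ,
      PhiL f (MvPolynomial.monomial a 1) =
        ∑ r, MvPolynomial.monomial (E r - a) (cnu (E r) a : K) := by
    intro a
    rw [PhiL_apply, hfE]
    show genAct cnu _ _ = _
    rw [genAct_sum_right]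
    apply Finset.sum_congr rfl
    intro r _
    rw [genAct_monomial, one_mul, mul_one]
  set Sf : Finset (Fin m →₀ ℕ) :=
    ((Finset.univ : Finset (Fin (n + 1))).biUnion fun r => Finset.Iic (g r)).filter
      fun s => (∑ k, s k) = d₂ - j with hSf
  set fam : ↑Sf → MvPolynomial (Fin (n + 1) ⊕ Fin m) K :=
    fun s => MvPolynomial.monomial ((s : Fin m →₀ ℕ).mapDomain Sum.inr) 1 with hfam
  -- basic facts about exponents of shape `single (inl r) d₁ + mapDomain inr b`
  have hDle : ∀ (r : Fin (n + 1)) (b : Fin m →₀ ℕ), b ≤ g r →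
      Finsupp.single (Sum.inl r) d₁ + b.mapDomain Sum.inr ≤ E r := by
    intro r b hb
    rw [Finsupp.le_def]
    intro x
    cases x with
    | inl r' =>
      simp [hE, Finsupp.add_apply, mapDomain_inl_apply]
    | inr k =>
      simp only [hE, Finsupp.add_apply, Finsupp.single_apply, mapDomain_inr_apply]
      rw [if_neg (fun hh => by cases hh), zero_add, zero_add]
      exact hb k
  have hDnle : ∀ (r r' : Fin (n + 1)) (b : Fin m →₀ ℕ), r' ≠ r →
      ¬ (Finsupp.single (Sum.inl r) d₁ + b.mapDomain Sum.inr ≤ E r') := by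
    intro r r' b hne hle
    have h := Finsupp.le_def.mp hle (Sum.inl r)
    simp only [hE, Finsupp.add_apply, Finsupp.single_apply, mapDomain_inl_apply,
      add_zero] at h
    rw [if_neg (fun hh => hne (Sum.inl.inj hh))] at h
    simp only [if_true] at h
    omega
  have hDsub : ∀ (r : Fin (n + 1)) (b : Fin m →₀ ℕ), b ≤ g r →
      E r - (Finsupp.single (Sum.inl r) d₁ + b.mapDomain Sum.inr)
        = (g r - b).mapDomain Sum.inr := by
    intro r b hb
    ext x
    cases x with
    | inl r' =>
      rw [Finsupp.tsub_apply, mapDomain_inl_apply]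
      simp only [hE, Finsupp.add_apply, mapDomain_inl_apply, add_zero]
      exact Nat.sub_self _
    | inr k =>
      rw [Finsupp.tsub_apply, mapDomain_inr_apply, Finsupp.tsub_apply]
      simp only [hE, Finsupp.add_apply, Finsupp.single_apply, mapDomain_inr_apply]
      rw [if_neg (fun hh => by cases hh), zero_add, zero_add]
  have hmap : (Tbi K d₁ j).map (PhiL f) = Submodule.span K (Set.range fam) := by
    apply le_antisymm
    · rintro p hp
      obtain ⟨α, hα, rfl⟩ := Submodule.mem_map.mp hp
      rw [← MvPolynomial.support_sum_monomial_coeff α, map_sum]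
      apply Submodule.sum_mem
      intro c hc
      have hcd : degX c = d₁ ∧ degU c = j := hα c hc
      have hmono : MvPolynomial.monomial c (MvPolynomial.coeff c α)
          = (MvPolynomial.coeff c α) • MvPolynomial.monomial c (1 : K) := by
        rw [MvPolynomial.smul_monomial, smul_eq_mul, mul_one]
      rw [hmono, map_smul]
      apply Submodule.smul_mem
      rw [hact]
      apply Submodule.sum_mem
      intro r _
      by_cases hle : c ≤ E r
      · have hlep := Finsupp.le_def.mp hle
        set cU : Fin m →₀ ℕ := Finsupp.comapDomain Sum.inr c Sum.inr_injective.injOn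
          with hcU
        have hcUa : ∀ k, cU k = c (Sum.inr k) := fun k => rfl
        have hcle : cU ≤ g r := by
          rw [Finsupp.le_def]
          intro k
          have h := hlep (Sum.inr k)
          simp only [hE, Finsupp.add_apply, Finsupp.single_apply,
            mapDomain_inr_apply] at h
          rw [if_neg (fun hh => by cases hh), zero_add] at h
          rw [hcUa]
          exact h
        have hsumU : (∑ k, cU k) = j := hcd.2
        have hc0 : ∀ r', r' ≠ r → c (Sum.inl r') = 0 := by
          intro r' hne
          have h := hlep (Sum.inl r')
          simp only [hE, Finsupp.add_apply, Finsupp.single_apply,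
            mapDomain_inl_apply, add_zero] at h
          rw [if_neg (fun hh => hne (Sum.inl.inj hh).symm)] at h
          omega
        have hcr : c (Sum.inl r) = d₁ := by
          have hX : (∑ r', c (Sum.inl r')) = d₁ := hcd.1
          rwa [Finset.sum_eq_single_of_mem r (Finset.mem_univ r)
            (fun r' _ hne => hc0 r' hne)] at hX
        have hcdec : c = Finsupp.single (Sum.inl r) d₁ + cU.mapDomain Sum.inr := by
          ext x
          cases x with
          | inl r' =>
            simp only [Finsupp.add_apply, Finsupp.single_apply, mapDomain_inl_apply,
              add_zero]
            by_cases hrr : r' = r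
            · subst hrr; rw [hcr, if_pos rfl]
            · rw [hc0 r' hrr, if_neg (fun hh => hrr (Sum.inl.inj hh).symm)]
          | inr k =>
            simp only [Finsupp.add_apply, Finsupp.single_apply, mapDomain_inr_apply]
            rw [if_neg (fun hh => by cases hh), zero_add]
            exact (hcUa k).symm
        have hsS : g r - cU ∈ Sf := by
          rw [hSf, Finset.mem_filter]
          refine ⟨Finset.mem_biUnion.mpr ⟨r, Finset.mem_univ r,
            Finset.mem_Iic.mpr tsub_le_self⟩, ?_⟩
          rw [sum_tsub_fin hcle, hgdeg, hsumU]
        rw [cnu_of_le hle, hcdec, hDsub r cU hcle]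
        exact Submodule.subset_span ⟨⟨g r - cU, hsS⟩, rfl⟩
      · rw [cnu_of_not_le hle, MvPolynomial.monomial_zero]
        exact Submodule.zero_mem _
    · rw [Submodule.span_le]
      rintro p ⟨⟨s, hs⟩, rfl⟩
      obtain ⟨hsb, hssum⟩ := Finset.mem_filter.mp hs
      obtain ⟨r, _, hrle⟩ := Finset.mem_biUnion.mp hsb
      have hsle : s ≤ g r := Finset.mem_Iic.mp hrle
      set b : Fin m →₀ ℕ := g r - s with hb
      have hble : b ≤ g r := tsub_le_self
      set A : (Fin (n + 1) ⊕ Fin m) →₀ ℕ :=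
        Finsupp.single (Sum.inl r) d₁ + b.mapDomain Sum.inr with hA
      have hAmem : MvPolynomial.monomial A (1 : K) ∈ Tbi K d₁ j := by
        apply monomial_mem_Tbi
        constructor
        · rw [hA, degX_add, degX_single, degX_mapDomain]
          omega
        · rw [hA, degU_add, degU_single, degU_mapDomain, hb, sum_tsub_fin hsle, hgdeg]
          omega
      apply Submodule.mem_map.mpr
      refine ⟨MvPolynomial.monomial A 1, hAmem, ?_⟩
      rw [hact A, Finset.sum_eq_single_of_mem r (Finset.mem_univ r)
        (fun r' _ hne => by
          rw [hA, cnu_of_not_le (hDnle r r' b hne), MvPolynomial.monomial_zero])]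
      rw [hA, cnu_of_le (hDle r b hble), hDsub r b hble, hb,
        tsub_tsub_cancel_of_le hsle]
  have hli : LinearIndependent K fam := by
    have hfc : fam = (MvPolynomial.basisMonomials (Fin (n + 1) ⊕ Fin m) K) ∘
        (fun s : ↑Sf => (s : Fin m →₀ ℕ).mapDomain Sum.inr) := by
      funext s
      simp [hfam, MvPolynomial.coe_basisMonomials]
    rw [hfc]
    exact (MvPolynomial.basisMonomials _ K).linearIndependent.comp _
      ((Finsupp.mapDomain_injective Sum.inr_injective).comp Subtype.val_injective)
  have e1 : Module.finrank K (Abi f d₁ j)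
      = Module.finrank K ((Abi f d₁ j).map (psiL f)) :=
    (Submodule.equivMapOfInjective _ (psiL_inj f) _).finrank_eq
  have e2 : (Abi f d₁ j).map (psiL f) = (Tbi K d₁ j).map (PhiL f) := by
    show ((Tbi K d₁ j).map (Ideal.Quotient.mkₐ K (cAnn f)).toLinearMap).map (psiL f) = _
    have hcomp : (psiL f).comp (Ideal.Quotient.mkₐ K (cAnn f)).toLinearMap = PhiL f :=
      LinearMap.ext (psiL_mk f)
    rw [← Submodule.map_comp, hcomp]
  rw [e1, e2, hmap, finrank_span_eq_card hli, Fintype.card_coe]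

end CW
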